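/- Let G=(V,E) be a finite simple undirected graph with β_e > 1 for all e ∈ E and 0 < λ_v ≤ 1 for all v ∈ V, and let the weighted random cluster model have edge parameters q_e = 1 − 1/β_e and vertex weights λ. Define P_SW^Ising = P_{I→R}·P_{R→I} and P_SW^wrc = P_{R→I}·P_{I→R} (matrix products). Then P_SW^Ising is reversible with respect to π_Ising, i.e. π_Ising(σ)·P_SW^Ising(σ,τ) = π_Ising(τ)·P_SW^Ising(τ,σ) for all σ,τ ∈ {0,1}^V, and P_SW^wrc is reversible with respect to π_wrc, i.e. π_wrc(S)·P_SW^wrc(S,S') = π_wrc(S')·P_SW^wrc(S',S) for all S,S' ⊆ E. -/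

import Mathlib

open Finset
open scoped Classical

noncomputable section

variable {V : Type*} [Fintype V] [DecidableEq V]

/-- The vertex set of the connected component of `v` in the graph `(V, S)`. -/
def compOf (S : Finset (Sym2 V)) (v : V) : Finset V :=
  Finset.univ.filter fun u => (SimpleGraph.fromEdgeSet (↑S : Set (Sym2 V))).Reachable v u

/-- `κ(V,S)`: the set of vertex sets of connected components of the graph `(V, S)`. -/
def kappa (S : Finset (Sym2 V)) : Finset (Finset V) :=
  Finset.univ.image (compOf S)

/-- `∏_{C ∈ κ(V,S)} (1 + ∏_{u ∈ C} λ_u)`. -/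
def clusterProd (S : Finset (Sym2 V)) (lam : V → ℝ) : ℝ :=
  ∏ C ∈ kappa S, (1 + ∏ u ∈ C, lam u)

/-- Weight of an edge subset `S ⊆ E₀` in the weighted random cluster model. -/
def wtWRC (E₀ : Finset (Sym2 V)) (q : Sym2 V → ℝ) (lam : V → ℝ) (S : Finset (Sym2 V)) : ℝ :=
  (∏ e ∈ S, q e) * (∏ f ∈ E₀ \ S, (1 - q f)) * clusterProd S lam

/-- Partition function of the weighted random cluster model. -/
def ZWRC (E₀ : Finset (Sym2 V)) (q : Sym2 V → ℝ) (lam : V → ℝ) : ℝ :=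
  ∑ S ∈ E₀.powerset, wtWRC E₀ q lam S

/-- The weighted random cluster distribution. -/
def piWRC (E₀ : Finset (Sym2 V)) (q : Sym2 V → ℝ) (lam : V → ℝ) (S : Finset (Sym2 V)) : ℝ :=
  wtWRC E₀ q lam S / ZWRC E₀ q lam

/-- The monochromatic edges of a spin configuration `σ`. -/
def monoEdges (E₀ : Finset (Sym2 V)) (σ : V → Bool) : Finset (Sym2 V) :=
  E₀.filter fun e => (e.map σ).IsDiag

/-- Weight of a spin configuration in the Ising model. -/
def wtIsing (E₀ : Finset (Sym2 V)) (β : Sym2 V → ℝ) (lam : V → ℝ) (σ : V → Bool) : ℝ :=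
  (∏ e ∈ monoEdges E₀ σ, β e) * ∏ v : V, (if σ v then lam v else 1)

/-- Ising partition function. -/
def ZIsing (E₀ : Finset (Sym2 V)) (β : Sym2 V → ℝ) (lam : V → ℝ) : ℝ :=
  ∑ σ : V → Bool, wtIsing E₀ β lam σ

/-- Ising Gibbs distribution. -/
def piIsing (E₀ : Finset (Sym2 V)) (β : Sym2 V → ℝ) (lam : V → ℝ) (σ : V → Bool) : ℝ :=
  wtIsing E₀ β lam σ / ZIsing E₀ β lam

/-- Vertices of odd degree in the graph `(V, S)`. -/
def oddVerts (S : Finset (Sym2 V)) : Finset V :=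
  Finset.univ.filter fun v => Odd (S.filter fun e => v ∈ e).card

/-- Weight of an edge subset in the subgraph-world model. -/
def wtSG (E₀ : Finset (Sym2 V)) (p : Sym2 V → ℝ) (η : V → ℝ) (S : Finset (Sym2 V)) : ℝ :=
  (∏ e ∈ S, p e) * (∏ f ∈ E₀ \ S, (1 - p f)) * ∏ v ∈ oddVerts S, η v

/-- Subgraph-world partition function. -/
def ZSG (E₀ : Finset (Sym2 V)) (p : Sym2 V → ℝ) (η : V → ℝ) : ℝ :=
  ∑ S ∈ E₀.powerset, wtSG E₀ p η S

/-- Subgraph-world distribution. -/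
def piSG (E₀ : Finset (Sym2 V)) (p : Sym2 V → ℝ) (η : V → ℝ) (S : Finset (Sym2 V)) : ℝ :=
  wtSG E₀ p η S / ZSG E₀ p η

/-- The transformation `P_{I→R}` from Ising configurations to edge subsets. -/
def PIR (E₀ : Finset (Sym2 V)) (β : Sym2 V → ℝ) (σ : V → Bool) (S : Finset (Sym2 V)) : ℝ :=
  if S ⊆ monoEdges E₀ σ then
    (∏ e ∈ S, (1 - (β e)⁻¹)) * ∏ f ∈ monoEdges E₀ σ \ S, (β f)⁻¹
  else 0

/-- The transformation `P_{R→I}` from edge subsets to Ising configurations. -/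
def PRI (E₀ : Finset (Sym2 V)) (lam : V → ℝ) (S : Finset (Sym2 V)) (σ : V → Bool) : ℝ :=
  if S ⊆ monoEdges E₀ σ then
    ∏ C ∈ kappa S, ((∏ v ∈ C, if σ v then lam v else 1) / (1 + ∏ v ∈ C, lam v))
  else 0

/-- Swendsen-Wang dynamics for the Ising model: `P_{I→R} ⬝ P_{R→I}`. -/
def PSWIsing (E₀ : Finset (Sym2 V)) (β : Sym2 V → ℝ) (lam : V → ℝ) (σ τ : V → Bool) : ℝ :=
  ∑ S ∈ E₀.powerset, PIR E₀ β σ S * PRI E₀ lam S τ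

/-- Swendsen-Wang dynamics for the weighted random cluster model: `P_{R→I} ⬝ P_{I→R}`. -/
def PSWwrc (E₀ : Finset (Sym2 V)) (β : Sym2 V → ℝ) (lam : V → ℝ)
    (S S' : Finset (Sym2 V)) : ℝ :=
  ∑ σ : V → Bool, PRI E₀ lam S σ * PIR E₀ β σ S'

/-- Lazy edge-flipping (Metropolis) dynamics for a distribution `pi` on subsets of `E₀`. -/
def PEF (E₀ : Finset (Sym2 V)) (pi : Finset (Sym2 V) → ℝ) (x y : Finset (Sym2 V)) : ℝ :=
  if x = y then
    1 - (1 / (2 * (E₀.card : ℝ))) * ∑ e ∈ E₀, min 1 (pi (symmDiff x {e}) / pi x)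
  else if (symmDiff x y).card = 1 then
    (1 / (2 * (E₀.card : ℝ))) * min 1 (pi y / pi x)
  else 0

/-- Variance of `f` with respect to a distribution `pi` supported on `states`. -/
def varOn {α : Type*} (states : Finset α) (pi f : α → ℝ) : ℝ :=
  (∑ x ∈ states, pi x * f x ^ 2) - (∑ x ∈ states, pi x * f x) ^ 2

/-- Dirichlet form of a Markov kernel `P` with stationary distribution `pi` on `states`. -/
def dirichletOn {α : Type*} (states : Finset α) (pi : α → ℝ) (P : α → α → ℝ) (f : α → ℝ) : ℝ :=
  ∑ x ∈ states, pi x * f x * (f x - ∑ y ∈ states, P x y * f y)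

/-- Spectral gap of a reversible Markov kernel `P` with stationary distribution `pi`. -/
def gapOn {α : Type*} (states : Finset α) (pi : α → ℝ) (P : α → α → ℝ) : ℝ :=
  sInf ((fun f : α → ℝ => dirichletOn states pi P f / varOn states pi f) ''
    {f | varOn states pi f ≠ 0})

/-- Total variation distance between two distributions on `states`. -/
def dTV {α : Type*} (states : Finset α) (μ ν : α → ℝ) : ℝ :=
  (1 / 2) * ∑ z ∈ states, |μ z - ν z|

/-- `t`-step transition probabilities of the Markov kernel `P` on state space `states`. -/
def kpow {α : Type*} (states : Finset α) (P : α → α → ℝ) : ℕ → α → α → ℝ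
  | 0 => fun x y => if x = y then 1 else 0
  | (t + 1) => fun x y => ∑ z ∈ states, P x z * kpow states P t z y


lemma mem_compOf {S : Finset (Sym2 V)} {v u : V} :
    u ∈ compOf S v ↔ (SimpleGraph.fromEdgeSet (↑S : Set (Sym2 V))).Reachable v u := by
  simp [compOf]

lemma mem_compOf_self (S : Finset (Sym2 V)) (v : V) : v ∈ compOf S v :=
  mem_compOf.2 (SimpleGraph.Reachable.refl v)

lemma compOf_eq_of_mem {S : Finset (Sym2 V)} {v u : V} (h : u ∈ compOf S v) :
    compOf S u = compOf S v := by
  ext w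
  simp only [mem_compOf] at *
  exact ⟨fun hw => h.trans hw, fun hw => h.symm.trans hw⟩

lemma compOf_mem_kappa (S : Finset (Sym2 V)) (v : V) : compOf S v ∈ kappa S :=
  Finset.mem_image_of_mem _ (Finset.mem_univ v)

lemma filter_compOf {S : Finset (Sym2 V)} {C : Finset V} (hC : C ∈ kappa S) :
    Finset.univ.filter (fun u => compOf S u = C) = C := by
  obtain ⟨v, -, rfl⟩ := Finset.mem_image.1 hC
  ext u
  simp only [Finset.mem_filter, Finset.mem_univ, true_and]
  constructor
  · intro h; rw [← h]; exact mem_compOf_self S u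
  · exact compOf_eq_of_mem

lemma kappa_nonempty {S : Finset (Sym2 V)} {C : Finset V} (hC : C ∈ kappa S) : C.Nonempty := by
  obtain ⟨v, -, rfl⟩ := Finset.mem_image.1 hC
  exact ⟨v, mem_compOf_self S v⟩

lemma prod_kappa (S : Finset (Sym2 V)) (g : V → ℝ) :
    ∏ C ∈ kappa S, ∏ v ∈ C, g v = ∏ v : V, g v := by
  rw [← Finset.prod_fiberwise_of_maps_to (fun v _ => compOf_mem_kappa S v) g]
  exact Finset.prod_congr rfl fun C hC => by rw [filter_compOf hC]

lemma reach_const {S E₀ : Finset (Sym2 V)} {σ : V → Bool} (hSE : S ⊆ E₀)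
    (h : S ⊆ monoEdges E₀ σ) {u v : V} (hr : u ∈ compOf S v) : σ u = σ v := by
  rw [mem_compOf] at hr
  obtain ⟨w⟩ := hr
  induction w with
  | nil => rfl
  | cons ha _ ih =>
    rename_i a b c _
    rw [SimpleGraph.fromEdgeSet_adj] at ha
    have hm := h (Finset.mem_coe.1 ha.1)
    rw [monoEdges, Finset.mem_filter] at hm
    have : σ a = σ b := by
      have := hm.2
      rw [Sym2.map_pair_eq, Sym2.isDiag_iff_proj_eq] at this
      exact this
    exact ih.trans this.symm

lemma compOf_eq_of_mem_kappa {S : Finset (Sym2 V)} {C : Finset V} (hC : C ∈ kappa S)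
    {u : V} (hu : u ∈ C) : compOf S u = C := by
  obtain ⟨v, -, rfl⟩ := Finset.mem_image.1 hC
  exact compOf_eq_of_mem hu

lemma sigma_const_on {E₀ S : Finset (Sym2 V)} {σ : V → Bool} (hSE : S ⊆ E₀)
    (h : S ⊆ monoEdges E₀ σ) {C : Finset V} (hC : C ∈ kappa S)
    {u v : V} (hu : u ∈ C) (hv : v ∈ C) : σ u = σ v := by
  obtain ⟨w, -, rfl⟩ := Finset.mem_image.1 hC
  exact (reach_const hSE h hu).trans (reach_const hSE h hv).symm

def repOf (S : Finset (Sym2 V)) (C : {C : Finset V // C ∈ kappa S}) : V :=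
  (kappa_nonempty C.2).choose

lemma repOf_mem (S : Finset (Sym2 V)) (C : {C : Finset V // C ∈ kappa S}) :
    repOf S C ∈ C.1 := (kappa_nonempty C.2).choose_spec

lemma sum_const_sigma (E₀ S : Finset (Sym2 V)) (hSE : S ⊆ E₀)
    (hdiag : ∀ e ∈ E₀, ¬ e.IsDiag) (L : V → Bool → ℝ) :
    ∑ σ : V → Bool, (if S ⊆ monoEdges E₀ σ then ∏ v, L v (σ v) else 0)
      = ∏ C ∈ kappa S, ∑ b : Bool, ∏ v ∈ C, L v b := by
  have key : ∀ (σ : V → Bool) (v : V), S ⊆ monoEdges E₀ σ →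
      σ (repOf S ⟨compOf S v, compOf_mem_kappa S v⟩) = σ v := by
    intro σ v hσ
    exact sigma_const_on hSE hσ (compOf_mem_kappa S v)
      (repOf_mem S ⟨compOf S v, compOf_mem_kappa S v⟩) (mem_compOf_self S v)
  rw [← Finset.sum_filter]
  have hR : ∏ C ∈ kappa S, ∑ b : Bool, ∏ v ∈ C, L v b
      = ∑ c : {C : Finset V // C ∈ kappa S} → Bool,
          ∏ x : {C : Finset V // C ∈ kappa S}, ∏ v ∈ x.1, L v (c x) := by
    rw [← Finset.prod_attach (kappa S) (fun C => ∑ b : Bool, ∏ v ∈ C, L v b),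
      ← Finset.univ_eq_attach, Finset.prod_univ_sum, Fintype.piFinset_univ]
  rw [hR]
  refine Finset.sum_nbij' (fun σ x => σ (repOf S x))
    (fun c v => c ⟨compOf S v, compOf_mem_kappa S v⟩) (fun _ _ => Finset.mem_univ _)
    ?_ ?_ ?_ ?_
  · intro c _
    simp only [Finset.mem_filter, Finset.mem_univ, true_and]
    intro e he
    induction e using Sym2.ind with
    | _ a b =>
      have hab : a ≠ b := fun h => hdiag _ (hSE he) (by simp [h])
      have hadj : (SimpleGraph.fromEdgeSet (↑S : Set (Sym2 V))).Adj a b := by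
        rw [SimpleGraph.fromEdgeSet_adj]; exact ⟨Finset.mem_coe.2 he, hab⟩
      have hcomp : compOf S a = compOf S b :=
        (compOf_eq_of_mem (mem_compOf.2 hadj.reachable)).symm
      rw [monoEdges, Finset.mem_filter]
      refine ⟨hSE he, ?_⟩
      rw [Sym2.map_pair_eq, Sym2.isDiag_iff_proj_eq]
      congr 1
      exact Subtype.ext hcomp
  · intro σ hσ
    rw [Finset.mem_filter] at hσ
    funext v
    exact key σ v hσ.2
  · intro c _
    funext x
    have hx : compOf S (repOf S x) = x.1 := compOf_eq_of_mem_kappa x.2 (repOf_mem S x)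
    exact congrArg c (Subtype.ext hx)
  · intro σ hσ
    rw [Finset.mem_filter] at hσ
    have : ∀ x : {C : Finset V // C ∈ kappa S}, ∏ v ∈ x.1, L v (σ (repOf S x))
        = ∏ v ∈ x.1, L v (σ v) := by
      intro x
      refine Finset.prod_congr rfl fun v hv => ?_
      rw [sigma_const_on hSE hσ.2 x.2 (repOf_mem S x) hv]
    rw [Finset.prod_congr rfl (fun x _ => this x)]
    rw [Finset.univ_eq_attach, Finset.prod_attach (kappa S) (fun C => ∏ v ∈ C, L v (σ v)),
      prod_kappa]


lemma clusterProd_pos (S : Finset (Sym2 V)) {lam : V → ℝ} (hlam : ∀ v, 0 < lam v) :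
    0 < clusterProd S lam := by
  refine Finset.prod_pos fun C _ => ?_
  have : 0 < ∏ v ∈ C, lam v := Finset.prod_pos fun v _ => hlam v
  linarith

lemma PRI_eq_of_subset {E₀ S : Finset (Sym2 V)} {lam : V → ℝ} {σ : V → Bool}
    (h : S ⊆ monoEdges E₀ σ) :
    PRI E₀ lam S σ = (∏ v : V, if σ v then lam v else 1) / clusterProd S lam := by
  rw [PRI, if_pos h, Finset.prod_div_distrib, prod_kappa, clusterProd]

lemma sum_PRI (E₀ S : Finset (Sym2 V)) (hSE : S ⊆ E₀)
    (hdiag : ∀ e ∈ E₀, ¬ e.IsDiag) {lam : V → ℝ} (hlam : ∀ v, 0 < lam v) :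
    ∑ σ : V → Bool, PRI E₀ lam S σ = 1 := by
  have hcp : clusterProd S lam ≠ 0 := ne_of_gt (clusterProd_pos S hlam)
  have h1 : ∀ σ : V → Bool, PRI E₀ lam S σ =
      (if S ⊆ monoEdges E₀ σ then ∏ v : V, (if σ v then lam v else 1) else 0)
        / clusterProd S lam := by
    intro σ
    by_cases h : S ⊆ monoEdges E₀ σ
    · rw [PRI_eq_of_subset h, if_pos h]
    · rw [PRI, if_neg h, if_neg h, zero_div]
  simp only [h1]
  rw [← Finset.sum_div, sum_const_sigma E₀ S hSE hdiag (fun v b => if b then lam v else 1)]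
  rw [div_eq_one_iff_eq hcp, clusterProd]
  refine Finset.prod_congr rfl fun C _ => ?_
  rw [Fintype.sum_bool]
  simp [add_comm]

lemma sum_PIR (E₀ : Finset (Sym2 V)) (β : Sym2 V → ℝ) (σ : V → Bool) :
    ∑ S ∈ E₀.powerset, PIR E₀ β σ S = 1 := by
  have hM : monoEdges E₀ σ ⊆ E₀ := Finset.filter_subset _ _
  rw [← Finset.sum_subset (Finset.powerset_mono.2 hM)
    (fun S _ hS => by
      rw [PIR, if_neg]
      exact fun hsub => hS (Finset.mem_powerset.2 hsub))]
  have : ∀ S ∈ (monoEdges E₀ σ).powerset, PIR E₀ β σ S =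
      (∏ e ∈ S, (1 - (β e)⁻¹)) * ∏ f ∈ monoEdges E₀ σ \ S, (β f)⁻¹ := by
    intro S hS
    rw [PIR, if_pos (Finset.mem_powerset.1 hS)]
  rw [Finset.sum_congr rfl this, ← Finset.prod_add]
  simp

lemma detailed (E₀ : Finset (Sym2 V)) (β : Sym2 V → ℝ) (lam : V → ℝ)
    (hβ : ∀ e ∈ E₀, 1 < β e) (hlam : ∀ v, 0 < lam v)
    (S : Finset (Sym2 V)) (hSE : S ⊆ E₀) (σ : V → Bool) :
    wtWRC E₀ (fun e => 1 - (β e)⁻¹) lam S * PRI E₀ lam S σ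
      = (∏ e ∈ E₀, (β e)⁻¹) * (wtIsing E₀ β lam σ * PIR E₀ β σ S) := by
  by_cases h : S ⊆ monoEdges E₀ σ
  · have hM : monoEdges E₀ σ ⊆ E₀ := Finset.filter_subset _ _
    have hcp : clusterProd S lam ≠ 0 := ne_of_gt (clusterProd_pos S hlam)
    have key : ∏ f ∈ E₀ \ S, (β f)⁻¹ =
        ((∏ e ∈ E₀, (β e)⁻¹) * ∏ e ∈ monoEdges E₀ σ, β e) * ∏ f ∈ monoEdges E₀ σ \ S, (β f)⁻¹ := by
      have h1 : (∏ f ∈ E₀ \ monoEdges E₀ σ, (β f)⁻¹) * ∏ f ∈ monoEdges E₀ σ, (β f)⁻¹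
          = ∏ e ∈ E₀, (β e)⁻¹ := Finset.prod_sdiff hM
      have h2 : (∏ f ∈ monoEdges E₀ σ, (β f)⁻¹) * ∏ f ∈ monoEdges E₀ σ, β f = 1 := by
        rw [← Finset.prod_mul_distrib]
        refine Finset.prod_eq_one fun e he => ?_
        exact inv_mul_cancel₀ (by have := hβ e (hM he); linarith)
      have h3 : (E₀ \ monoEdges E₀ σ) ∪ (monoEdges E₀ σ \ S) = E₀ \ S := by
        ext e
        simp only [Finset.mem_union, Finset.mem_sdiff]
        constructor
        · rintro (⟨he, hm⟩ | ⟨hm, hs⟩)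
          · exact ⟨he, fun hs => hm (h hs)⟩
          · exact ⟨hM hm, hs⟩
        · rintro ⟨he, hs⟩
          by_cases hm : e ∈ monoEdges E₀ σ
          · exact Or.inr ⟨hm, hs⟩
          · exact Or.inl ⟨he, hm⟩
      have h4 : Disjoint (E₀ \ monoEdges E₀ σ) (monoEdges E₀ σ \ S) := by
        rw [Finset.disjoint_left]
        intro e he hm
        exact (Finset.mem_sdiff.1 he).2 (Finset.mem_sdiff.1 hm).1
      have h5 : (∏ f ∈ E₀ \ monoEdges E₀ σ, (β f)⁻¹) * ∏ f ∈ monoEdges E₀ σ \ S, (β f)⁻¹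
          = ∏ f ∈ E₀ \ S, (β f)⁻¹ := by
        rw [← Finset.prod_union h4, h3]
      calc ∏ f ∈ E₀ \ S, (β f)⁻¹
          = (∏ f ∈ E₀ \ monoEdges E₀ σ, (β f)⁻¹) * ∏ f ∈ monoEdges E₀ σ \ S, (β f)⁻¹ := h5.symm
        _ = ((∏ f ∈ E₀ \ monoEdges E₀ σ, (β f)⁻¹) *
              ((∏ f ∈ monoEdges E₀ σ, (β f)⁻¹) * ∏ f ∈ monoEdges E₀ σ, β f)) *
              ∏ f ∈ monoEdges E₀ σ \ S, (β f)⁻¹ := by rw [h2]; ring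
        _ = ((∏ e ∈ E₀, (β e)⁻¹) * ∏ e ∈ monoEdges E₀ σ, β e) *
              ∏ f ∈ monoEdges E₀ σ \ S, (β f)⁻¹ := by rw [← h1]; ring
    rw [wtWRC, wtIsing, PIR, if_pos h, PRI_eq_of_subset h]
    have hq : ∀ f, (1 : ℝ) - (1 - (β f)⁻¹) = (β f)⁻¹ := fun f => by ring
    simp only [hq]
    rw [key]
    field_simp [hcp]
  · rw [PRI, PIR, if_neg h, if_neg h]
    ring



lemma ZIsing_pos (E₀ : Finset (Sym2 V)) (β : Sym2 V → ℝ) (lam : V → ℝ)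
    (hβ : ∀ e ∈ E₀, 1 < β e) (hlam : ∀ v, 0 < lam v) : 0 < ZIsing E₀ β lam := by
  rw [ZIsing]
  refine Finset.sum_pos (fun σ _ => ?_) Finset.univ_nonempty
  rw [wtIsing]
  refine mul_pos (Finset.prod_pos fun e he => ?_) (Finset.prod_pos fun v _ => ?_)
  · have he' : e ∈ E₀ := Finset.filter_subset _ _ he
    have := hβ e he'; linarith
  · by_cases hv : σ v
    · simp [hv, hlam v]
    · simp [hv]

lemma Z_rel (G : SimpleGraph V) [DecidableRel G.Adj] (β : Sym2 V → ℝ) (lam : V → ℝ)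
    (hβ : ∀ e ∈ G.edgeFinset, 1 < β e) (hlam : ∀ v, 0 < lam v) :
    ZWRC G.edgeFinset (fun e => 1 - (β e)⁻¹) lam
      = (∏ e ∈ G.edgeFinset, (β e)⁻¹) * ZIsing G.edgeFinset β lam := by
  have hdiag : ∀ e ∈ G.edgeFinset, ¬ e.IsDiag := fun e he =>
    G.not_isDiag_of_mem_edgeSet (SimpleGraph.mem_edgeFinset.1 he)
  rw [ZWRC]
  have step : ∀ S ∈ G.edgeFinset.powerset,
      wtWRC G.edgeFinset (fun e => 1 - (β e)⁻¹) lam S =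
        ∑ σ : V → Bool, (∏ e ∈ G.edgeFinset, (β e)⁻¹) *
          (wtIsing G.edgeFinset β lam σ * PIR G.edgeFinset β σ S) := by
    intro S hS
    have hSE := Finset.mem_powerset.1 hS
    calc wtWRC G.edgeFinset (fun e => 1 - (β e)⁻¹) lam S
        = wtWRC G.edgeFinset (fun e => 1 - (β e)⁻¹) lam S *
            ∑ σ : V → Bool, PRI G.edgeFinset lam S σ := by
          rw [sum_PRI _ _ hSE hdiag hlam, mul_one]
      _ = ∑ σ : V → Bool, wtWRC G.edgeFinset (fun e => 1 - (β e)⁻¹) lam S *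
            PRI G.edgeFinset lam S σ := Finset.mul_sum _ _ _
      _ = _ := Finset.sum_congr rfl fun σ _ => detailed _ β lam hβ hlam S hSE σ
  rw [Finset.sum_congr rfl step, Finset.sum_comm, ZIsing, Finset.mul_sum]
  refine Finset.sum_congr rfl fun σ _ => ?_
  have : ∑ S ∈ G.edgeFinset.powerset, (∏ e ∈ G.edgeFinset, (β e)⁻¹) *
      (wtIsing G.edgeFinset β lam σ * PIR G.edgeFinset β σ S)
      = (∏ e ∈ G.edgeFinset, (β e)⁻¹) * (wtIsing G.edgeFinset β lam σ *
        ∑ S ∈ G.edgeFinset.powerset, PIR G.edgeFinset β σ S) := by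
    simp [Finset.mul_sum]
  rw [this, sum_PIR, mul_one]

lemma pi_rel (G : SimpleGraph V) [DecidableRel G.Adj] (β : Sym2 V → ℝ) (lam : V → ℝ)
    (hβ : ∀ e ∈ G.edgeFinset, 1 < β e) (hlam : ∀ v, 0 < lam v)
    (S : Finset (Sym2 V)) (hSE : S ⊆ G.edgeFinset) (σ : V → Bool) :
    piWRC G.edgeFinset (fun e => 1 - (β e)⁻¹) lam S * PRI G.edgeFinset lam S σ
      = piIsing G.edgeFinset β lam σ * PIR G.edgeFinset β σ S := by
  have hc : (∏ e ∈ G.edgeFinset, (β e)⁻¹) ≠ 0 :=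
    Finset.prod_ne_zero_iff.2 fun e he => inv_ne_zero (by have := hβ e he; linarith)
  rw [piWRC, piIsing, Z_rel G β lam hβ hlam, div_mul_eq_mul_div, div_mul_eq_mul_div,
    detailed _ β lam hβ hlam S hSE σ, mul_div_mul_left _ _ hc]

/-- Reversibility of the Swendsen-Wang dynamics: `P_SW^Ising` is reversible with respect to
`π_Ising` and `P_SW^wrc` is reversible with respect to `π_wrc`, with `q_e = 1 − 1/β_e`. -/
theorem sw_reversible {V : Type*} [Fintype V] [DecidableEq V]
    (G : SimpleGraph V) [DecidableRel G.Adj]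
    (β : Sym2 V → ℝ) (lam : V → ℝ)
    (hβ : ∀ e ∈ G.edgeFinset, 1 < β e)
    (hlam : ∀ v : V, 0 < lam v ∧ lam v ≤ 1) :
    (∀ σ τ : V → Bool,
      piIsing G.edgeFinset β lam σ * PSWIsing G.edgeFinset β lam σ τ =
        piIsing G.edgeFinset β lam τ * PSWIsing G.edgeFinset β lam τ σ) ∧
    (∀ S ∈ G.edgeFinset.powerset, ∀ S' ∈ G.edgeFinset.powerset,
      piWRC G.edgeFinset (fun e => 1 - (β e)⁻¹) lam S * PSWwrc G.edgeFinset β lam S S' =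
        piWRC G.edgeFinset (fun e => 1 - (β e)⁻¹) lam S' * PSWwrc G.edgeFinset β lam S' S) := by
  have hlam' : ∀ v, 0 < lam v := fun v => (hlam v).1
  constructor
  · intro σ τ
    rw [PSWIsing, PSWIsing, Finset.mul_sum, Finset.mul_sum]
    refine Finset.sum_congr rfl fun S hS => ?_
    have hSE := Finset.mem_powerset.1 hS
    rw [← mul_assoc, ← mul_assoc, ← pi_rel G β lam hβ hlam' S hSE σ,
      ← pi_rel G β lam hβ hlam' S hSE τ]
    ring
  · intro S hS S' hS'
    have hSE := Finset.mem_powerset.1 hS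
    have hSE' := Finset.mem_powerset.1 hS'
    rw [PSWwrc, PSWwrc, Finset.mul_sum, Finset.mul_sum]
    refine Finset.sum_congr rfl fun σ _ => ?_
    rw [← mul_assoc, ← mul_assoc, pi_rel G β lam hβ hlam' S hSE σ,
      pi_rel G β lam hβ hlam' S' hSE' σ]
    ring

end
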